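/- Let ρ ∈ (0,1), and let v, u be complex numbers with 0 < |u+1| < 1 and |u+1| < |v+1|. Let Y = (y_1,…,y_N) with y_N < ⋯ < y_1 and let (G_k), τ be as in the geometric random walk setup. Then the series ch_Y(v,u) := Σ_{x∈ℤ} ((1+u)/(1−ρ))^x E_{G_0=x}[ (1−ρ)^{G_τ}/(1+v)^{G_τ+1} · ((−v/(1+v))·((1−ρ)/ρ))^τ 1_{τ<N} ] converges absolutely; in particular, the contribution of x > y_1 sums to (1/(v−u))·((1+u)/(1+v))^{y_1+1}, and all terms with x < y_N + N vanish. -/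

import Mathlib

open MeasureTheory ProbabilityTheory Complex
open scoped Classical

/-- The walk `(W_k)` on `ℤ` (started at `0`) has i.i.d. steps with law
`P(step = −j) = ρ(1−ρ)^{j−1}`, `j ≥ 1`. -/
def IsNegGeomWalk (ρ : ℝ) {Ω : Type*} [MeasurableSpace Ω] (μ : Measure Ω)
    (W : ℕ → Ω → ℤ) : Prop :=
  (∀ n, Measurable (W n)) ∧
  (∀ (n : ℕ) (j : ℤ), μ {ω | W (n + 1) ω - W n ω = j} =
      ENNReal.ofReal (if j ≤ -1 then ρ * (1 - ρ) ^ (-j - 1) else 0)) ∧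
  iIndepFun (fun n : ℕ => fun ω => W (n + 1) ω - W n ω) μ

lemma aux_y {N : ℕ} {y : ℕ → ℤ} (hy : ∀ m, m + 1 < N → y (m + 1) < y m)
    (a b : ℕ) (hab : a ≤ b) (hbN : b < N) : y b + b ≤ y a + a := by
  induction b, hab using Nat.le_induction with
  | base => exact le_refl _
  | succ n hn ih =>
    have h1 : y (n + 1) < y n := hy n hbN
    have h2 := ih (by omega)
    push_cast
    push_cast at h2
    omega

lemma walk_le {ρ : ℝ} {Ω : Type*} [MeasurableSpace Ω] {μ : Measure Ω}
    {W : ℕ → Ω → ℤ} (hW : IsNegGeomWalk ρ μ W) (hW0 : ∀ ω, W 0 ω = 0) :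
    ∀ᵐ ω ∂μ, ∀ m, W m ω ≤ -m := by
  have hstep : ∀ n : ℕ, ∀ᵐ ω ∂μ, W (n + 1) ω - W n ω ≤ -1 := by
    intro n
    rw [ae_iff]
    have hsub : {ω | ¬ (W (n + 1) ω - W n ω ≤ -1)} ⊆
        ⋃ j : ℕ, {ω | W (n + 1) ω - W n ω = (j : ℤ)} := by
      intro ω hω
      simp only [Set.mem_setOf_eq, not_le] at hω
      have h0 : 0 ≤ W (n + 1) ω - W n ω := by omega
      exact Set.mem_iUnion.mpr ⟨_, (Int.toNat_of_nonneg h0).symm⟩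
    refine measure_mono_null hsub (measure_iUnion_null fun j => ?_)
    rw [hW.2.1 n (j : ℤ)]
    simp [show ¬ ((j : ℤ) ≤ -1) by omega]
  filter_upwards [ae_all_iff.mpr hstep] with ω hω
  intro m
  induction m with
  | zero => simp [hW0 ω]
  | succ n ih =>
    have := hω n
    push_cast
    push_cast at ih
    omega

/-- absolute convergence of the series defining `ch_Y(v,u)`.  With the walk
started at `x` realized as `x + W_m`, `y m` denoting `y_{m+1}` (0-based, strictly
decreasing), and `τ = min{m : G_m > y_{m+1}}`, the series
`Σ_{x∈ℤ} ((1+u)/(1−ρ))^x E_{G_0=x}[(1−ρ)^{G_τ}/(1+v)^{G_τ+1} ((−v/(1+v))((1−ρ)/ρ))^τ 1_{τ<N}]`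
converges absolutely; the terms with `x > y_1` sum to `(1/(v−u)) ((1+u)/(1+v))^{y_1+1}`,
and the terms with `x < y_N + N` vanish. -/
theorem statement11 (ρ : ℝ) (h0 : 0 < ρ) (h1 : ρ < 1)
    {Ω : Type*} [MeasurableSpace Ω] (μ : Measure Ω) [IsProbabilityMeasure μ]
    (W : ℕ → Ω → ℤ) (hW : IsNegGeomWalk ρ μ W) (hW0 : ∀ ω, W 0 ω = 0)
    (N : ℕ) (hN : 1 ≤ N) (y : ℕ → ℤ) (hy : ∀ m, m + 1 < N → y (m + 1) < y m)
    (u v : ℂ) (hu0 : 0 < ‖u + 1‖) (hu1 : ‖u + 1‖ < 1) (huv : ‖u + 1‖ < ‖v + 1‖) :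
    let T : ℤ → ℂ := fun x =>
      ((u + 1) / ((1 : ℂ) - (ρ : ℂ))) ^ x *
        ∫ ω, (if _ : ∃ m, m < N ∧ y m < x + W m ω then
            ((1 : ℂ) - (ρ : ℂ)) ^ (x + W (sInf {m | y m < x + W m ω}) ω) /
              (1 + v) ^ (x + W (sInf {m | y m < x + W m ω}) ω + 1) *
              ((-v / (1 + v)) * (((1 : ℂ) - (ρ : ℂ)) / (ρ : ℂ))) ^
                (sInf {m | y m < x + W m ω})
          else 0) ∂μ
    Summable (fun x : ℤ => ‖T x‖) ∧
    (∑' x : ℤ, (if y 0 < x then T x else 0)) =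
      1 / (v - u) * ((u + 1) / (v + 1)) ^ (y 0 + 1) ∧
    (∀ x : ℤ, x < y (N - 1) + N → T x = 0) := by
  intro T
  have hρ1 : (1 : ℂ) - (ρ : ℂ) ≠ 0 := by
    have : ((1 - ρ : ℝ) : ℂ) ≠ 0 := by
      rw [Complex.ofReal_ne_zero]; linarith
    simpa using this
  have hu : u + 1 ≠ 0 := by
    intro h; rw [h] at hu0; simp at hu0
  have hv : v + 1 ≠ 0 := by
    intro h; rw [h, norm_zero] at huv
    exact absurd huv (not_lt.mpr (norm_nonneg _))
  have hvu : v - u ≠ 0 := by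
    intro h
    have : v = u := sub_eq_zero.mp h
    rw [this] at huv; exact lt_irrefl _ huv
  set r : ℂ := (u + 1) / (v + 1) with hrdef
  have hr : ‖r‖ < 1 := by
    rw [norm_div, div_lt_one (lt_of_le_of_lt (norm_nonneg _) huv)]
    exact huv
  have hr1 : (1 : ℂ) - r ≠ 0 := by
    intro h
    have : ‖r‖ = 1 := by
      have : r = 1 := by
        have := sub_eq_zero.mp h; exact this.symm
      rw [this]; simp
    linarith
  -- value of T for large x
  have hT_gt : ∀ x : ℤ, y 0 < x → T x = (u + 1) ^ x / (v + 1) ^ (x + 1) := by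
    intro x hx
    have hcond : ∀ ω : Ω, ∃ m, m < N ∧ y m < x + W m ω := fun ω =>
      ⟨0, hN, by simpa [hW0 ω] using hx⟩
    have hinf : ∀ ω : Ω, sInf {m | y m < x + W m ω} = 0 := fun ω =>
      Nat.sInf_eq_zero.mpr (Or.inl (by simpa [hW0 ω] using hx))
    have hfun : (fun ω => (if _ : ∃ m, m < N ∧ y m < x + W m ω then
            ((1 : ℂ) - (ρ : ℂ)) ^ (x + W (sInf {m | y m < x + W m ω}) ω) /
              (1 + v) ^ (x + W (sInf {m | y m < x + W m ω}) ω + 1) *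
              ((-v / (1 + v)) * (((1 : ℂ) - (ρ : ℂ)) / (ρ : ℂ))) ^
                (sInf {m | y m < x + W m ω})
          else 0)) = fun _ => ((1 : ℂ) - (ρ : ℂ)) ^ x / (1 + v) ^ (x + 1) := by
      funext ω
      rw [dif_pos (hcond ω), hinf ω, hW0 ω]
      simp
    show ((u + 1) / ((1 : ℂ) - (ρ : ℂ))) ^ x * _ = _
    rw [hfun, integral_const, probReal_univ]
    simp only [ENNReal.toReal_one, one_smul]
    rw [div_zpow, div_mul_div_comm, mul_comm ((u + 1) ^ x) _,
      mul_div_mul_left _ _ (zpow_ne_zero _ hρ1), add_comm 1 v]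
  -- T vanishes for small x
  have hT_lt : ∀ x : ℤ, x < y (N - 1) + N → T x = 0 := by
    intro x hx
    have hint : (∫ ω, (if _ : ∃ m, m < N ∧ y m < x + W m ω then
            ((1 : ℂ) - (ρ : ℂ)) ^ (x + W (sInf {m | y m < x + W m ω}) ω) /
              (1 + v) ^ (x + W (sInf {m | y m < x + W m ω}) ω + 1) *
              ((-v / (1 + v)) * (((1 : ℂ) - (ρ : ℂ)) / (ρ : ℂ))) ^
                (sInf {m | y m < x + W m ω})
          else 0) ∂μ) = 0 := by
      refine integral_eq_zero_of_ae ?_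
      filter_upwards [walk_le hW hW0] with ω hω
      have hno : ¬ ∃ m, m < N ∧ y m < x + W m ω := by
        rintro ⟨m, hm, hym⟩
        have h1 : W m ω ≤ -(m : ℤ) := hω m
        have h2 : y (N - 1) + ((N - 1 : ℕ) : ℤ) ≤ y m + m :=
          aux_y hy m (N - 1) (by omega) (by omega)
        omega
      simp [hno]
    show ((u + 1) / ((1 : ℂ) - (ρ : ℂ))) ^ x * _ = 0
    rw [hint, mul_zero]
  -- setup for the right tail
  set C : ℂ := (u + 1) ^ (y 0 + 1) / (v + 1) ^ (y 0 + 2) with hCdef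
  set e : ℕ → ℤ := fun n => y 0 + 1 + n with hedef
  have he_inj : Function.Injective e := by
    intro a b h
    simp only [hedef] at h
    omega
  have he_mem : ∀ n : ℕ, y 0 < e n := by intro n; simp only [hedef]; omega
  have he_range : ∀ x : ℤ, x ∉ Set.range e → x ≤ y 0 := by
    intro x hx
    by_contra hc
    exact hx ⟨(x - y 0 - 1).toNat, by simp only [hedef]; omega⟩
  have hTe : ∀ n : ℕ, T (e n) = C * r ^ n := by
    intro n
    rw [hT_gt _ (he_mem n)]
    have h1 : (e n : ℤ) = (y 0 + 1) + (n : ℤ) := by simp [hedef]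
    have h2 : (e n + 1 : ℤ) = (y 0 + 2) + (n : ℤ) := by simp [hedef]; ring
    rw [h1, h2, zpow_add₀ hu, zpow_add₀ hv, zpow_natCast, zpow_natCast, hCdef, hrdef,
      div_pow, div_mul_div_comm]
  refine ⟨?_, ?_, hT_lt⟩
  · -- summability
    set S : ℤ → ℝ := fun x => if y 0 < x then ‖T x‖ else 0 with hSdef
    set D : ℤ → ℝ := fun x => if y 0 < x then 0 else ‖T x‖ with hDdef
    have hSD : ∀ x, S x + D x = ‖T x‖ := by
      intro x
      by_cases h : y 0 < x <;> simp [hSdef, hDdef, h]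
    have hD : Summable D := by
      refine summable_of_ne_finset_zero (s := Finset.Icc (y (N - 1) + N) (y 0)) ?_
      intro x hx
      simp only [Finset.mem_Icc, not_and, not_le] at hx
      by_cases h : y 0 < x
      · simp [hDdef, h]
      · have hxs : x < y (N - 1) + N := by
          by_contra hc
          exact h (hx (not_lt.mp hc))
        simp [hDdef, h, hT_lt x hxs]
    have hS : Summable S := by
      refine (he_inj.summable_iff ?_).mp ?_
      · intro x hx
        simp [hSdef, not_lt.mpr (he_range x hx)]
      · have hco : ∀ n : ℕ, (S ∘ e) n = ‖C‖ * ‖r‖ ^ n := by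
          intro n
          simp only [Function.comp_apply, hSdef, if_pos (he_mem n), hTe n, norm_mul, norm_pow]
        exact Summable.congr
          ((summable_geometric_of_lt_one (norm_nonneg r) hr).mul_left ‖C‖)
          (fun n => (hco n).symm)
    exact Summable.congr (hS.add hD) hSD
  · -- the tsum
    have hsupp : Function.support (fun x : ℤ => if y 0 < x then T x else 0) ⊆
        Set.range e := by
      intro x hx
      by_contra hc
      have := he_range x hc
      simp only [Function.mem_support, if_neg (not_lt.mpr this)] at hx
      exact hx rfl
    rw [← he_inj.tsum_eq hsupp]
    have hterm : ∀ n : ℕ, (if y 0 < e n then T (e n) else 0) = C * r ^ n := by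
      intro n
      rw [if_pos (he_mem n), hTe n]
    rw [tsum_congr hterm, tsum_mul_left, tsum_geometric_of_norm_lt_one hr]
    have h1r : (1 - r)⁻¹ = (v + 1) / (v - u) := by
      rw [hrdef]
      rw [show (1 : ℂ) - (u + 1) / (v + 1) = (v - u) / (v + 1) by field_simp; ring, inv_div]
    rw [h1r, hCdef, div_zpow, show (y 0 + 2 : ℤ) = (y 0 + 1) + 1 by ring,
      zpow_add₀ hv, zpow_one]
    have key : ∀ a b c d : ℂ, c ≠ 0 → b ≠ 0 → d ≠ 0 →
        a / (b * c) * (c / d) = 1 / d * (a / b) := by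
      intro a b c d hc hb hd
      field_simp
    exact key _ _ _ _ hv (zpow_ne_zero _ hv) hvu
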